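/- Let A be a linear endomorphism of a finite-dimensional vector space V over a field F whose minimal polynomial is p^r for an irreducible separable polynomial p. If A = S + N = S' + N' are two decompositions with S, S' semisimple, N, N' nilpotent, S N = N S, and S' N' = N' S', then S = S' and N = N'. -/

import Mathlib

open Polynomial

/-- An endomorphism `S` is semisimple if every `S`-invariant subspace admits an
`S`-invariant complement. -/
def IsSemisimpleEnd {F V : Type*} [Field F] [AddCommGroup V] [Module F V]
    (S : Module.End F V) : Prop :=
  ∀ W : Submodule F V, (∀ x ∈ W, S x ∈ W) →
    ∃ W' : Submodule F V, (∀ x ∈ W', S x ∈ W') ∧ IsCompl W W'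

/-- bridging our def to mathlib's -/
lemma isSemisimpleEnd_iff {F V : Type*} [Field F] [AddCommGroup V] [Module F V]
    (S : Module.End F V) : IsSemisimpleEnd S ↔ S.IsSemisimple := by
  rw [Module.End.isSemisimple_iff]
  constructor
  · intro h W hW
    obtain ⟨W', hW', hcompl⟩ := h W (by
      intro x hx
      exact (Module.End.mem_invtSubmodule S).mp hW hx)
    exact ⟨W', (Module.End.mem_invtSubmodule S).mpr (fun x hx => hW' x hx), hcompl⟩
  · intro h W hW
    obtain ⟨W', hW', hcompl⟩ := h W ((Module.End.mem_invtSubmodule S).mpr hW)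
    exact ⟨W', fun x hx => (Module.End.mem_invtSubmodule S).mp hW' hx, hcompl⟩

/-- In a ring, a nilpotent element satisfying `d = c * d ^ 2` with `c` commuting with `d`
is zero. -/
lemma eq_zero_of_self_eq_mul_sq {T : Type*} [Ring T] {c d : T} (hcm : Commute c d)
    (h : d = c * d ^ 2) (hd : IsNilpotent d) : d = 0 := by
  obtain ⟨k, hk⟩ := hd
  have key : ∀ m : ℕ, d = c ^ m * d ^ (m + 1) := by
    intro m
    induction m with
    | zero => simp
    | succ m ih =>
      have hcmp : d ^ m * c = c * d ^ m := ((hcm.symm).pow_left m).eq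
      calc d = c ^ m * d ^ (m + 1) := ih
        _ = c ^ m * (d ^ m * d) := by rw [pow_succ]
        _ = c ^ m * (d ^ m * (c * d ^ 2)) := by rw [← h]
        _ = c ^ m * ((d ^ m * c) * d ^ 2) := by rw [mul_assoc (d ^ m)]
        _ = c ^ m * (c * (d ^ m * d ^ 2)) := by rw [hcmp, mul_assoc]
        _ = (c ^ m * c) * (d ^ m * d ^ 2) := by rw [mul_assoc]
        _ = c ^ (m + 1) * d ^ (m + 1 + 1) := by
            rw [pow_succ c]
            congr 1
            rw [sq, ← mul_assoc, ← pow_succ, ← pow_succ]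
  calc d = c ^ k * d ^ (k + 1) := key k
    _ = c ^ k * (d ^ k * d) := by rw [pow_succ]
    _ = 0 := by rw [hk, zero_mul, mul_zero]

/-- Commuting elements: `x` commutes with `aeval y q` whenever `x` commutes with `y`. -/
lemma commute_aeval' {F R : Type*} [Field F] [Ring R] [Algebra F R] {x y : R}
    (h : Commute x y) (q : F[X]) : Commute x (Polynomial.aeval y q) := by
  induction q using Polynomial.induction_on' with
  | add f g hf hg => rw [map_add]; exact hf.add_right hg
  | monomial n a =>
      rw [Polynomial.aeval_monomial]
      exact (Algebra.commute_algebraMap_right a x).mul_right (h.pow_right n)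

/-- Key separability lemma: if `p` is separable and both `φ s` and `φ s + φ d` are roots of
`p`, where `φ` is an algebra hom from a commutative ring and `φ d` is nilpotent, then
`φ d = 0`. -/
lemma nilpotent_eq_zero_of_sep {F R T : Type*} [Field F] [CommRing R] [Algebra F R]
    [Ring T] [Algebra F T] (φ : R →ₐ[F] T)
    {p : F[X]} (hsep : p.Separable) (s d : R)
    (hs : Polynomial.aeval (φ s) p = 0) (hsd : Polynomial.aeval (φ s + φ d) p = 0)
    (hd : IsNilpotent (φ d)) : φ d = 0 := by
  obtain ⟨a, b, hab⟩ := hsep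
  set P : R[X] := p.map (algebraMap F R) with hP
  obtain ⟨k, hk⟩ := P.binomExpansion s d
  have hPe : ∀ t : R, P.eval t = Polynomial.aeval t p := by
    intro t; rw [hP, eval_map, ← aeval_def]
  have hPd : P.derivative.eval s = Polynomial.aeval s p.derivative := by
    rw [hP, derivative_map, eval_map, ← aeval_def]
  rw [hPe, hPe, hPd] at hk
  -- apply φ
  have hφk := congrArg φ hk
  rw [map_add, map_add, map_mul, map_mul, ← Polynomial.aeval_algHom_apply,
    ← Polynomial.aeval_algHom_apply, ← Polynomial.aeval_algHom_apply, map_add, map_pow,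
    hsd, hs, zero_add] at hφk
  -- hφk : 0 = aeval (φ s) p.derivative * φ d + φ k * (φ d) ^ 2
  have hu : Polynomial.aeval (φ s) b * Polynomial.aeval (φ s) p.derivative = 1 := by
    have h2 := congrArg (Polynomial.aeval (φ s)) hab
    rw [map_add, map_mul, map_mul, hs, mul_zero, zero_add, map_one] at h2
    exact h2
  have hcomm1 : Commute (φ s) (φ d) := by
    rw [Commute, SemiconjBy, ← map_mul, ← map_mul, mul_comm]
  have hcomm2 : Commute (φ d) (Polynomial.aeval (φ s) b) := commute_aeval' hcomm1.symm b
  have hcomm3 : Commute (φ k) (φ d) := by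
    rw [Commute, SemiconjBy, ← map_mul, ← map_mul, mul_comm]
  have heq : φ d = (-(Polynomial.aeval (φ s) b * φ k)) * (φ d) ^ 2 := by
    have h3 : Polynomial.aeval (φ s) p.derivative * φ d = -(φ k * (φ d) ^ 2) :=
      eq_neg_of_add_eq_zero_left hφk.symm
    calc φ d = (Polynomial.aeval (φ s) b * Polynomial.aeval (φ s) p.derivative) * φ d := by
          rw [hu, one_mul]
      _ = Polynomial.aeval (φ s) b * (Polynomial.aeval (φ s) p.derivative * φ d) :=
          mul_assoc _ _ _
      _ = Polynomial.aeval (φ s) b * (-(φ k * (φ d) ^ 2)) := by rw [h3]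
      _ = (-(Polynomial.aeval (φ s) b * φ k)) * (φ d) ^ 2 := by
          rw [mul_neg, neg_mul, mul_assoc]
  refine eq_zero_of_self_eq_mul_sq ?_ heq hd
  exact (hcomm2.symm.mul_left hcomm3).neg_left

/-- If `φ s + φ n` is a root of `q` and `φ n` is nilpotent, then `aeval (φ s) q` is
nilpotent. -/
lemma aeval_nilpotent_of_add {F R T : Type*} [Field F] [CommRing R] [Algebra F R]
    [Ring T] [Algebra F T] (φ : R →ₐ[F] T) (q : F[X]) (s n : R)
    (hq : Polynomial.aeval (φ s + φ n) q = 0) (hn : IsNilpotent (φ n)) :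
    IsNilpotent (Polynomial.aeval (φ s) q) := by
  set P : R[X] := q.map (algebraMap F R) with hP
  obtain ⟨k, hk⟩ := P.binomExpansion s n
  have hPe : ∀ t : R, P.eval t = Polynomial.aeval t q := by
    intro t; rw [hP, eval_map, ← aeval_def]
  have hPd : P.derivative.eval s = Polynomial.aeval s q.derivative := by
    rw [hP, derivative_map, eval_map, ← aeval_def]
  rw [hPe, hPe, hPd] at hk
  have hφk := congrArg φ hk
  rw [map_add, map_add, map_mul, map_mul, ← Polynomial.aeval_algHom_apply,
    ← Polynomial.aeval_algHom_apply, ← Polynomial.aeval_algHom_apply, map_add, map_pow,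
    hq] at hφk
  -- hφk : 0 = aeval (φ s) q + aeval (φ s) q.derivative * φ n + φ k * (φ n) ^ 2
  have heq : Polynomial.aeval (φ s) q =
      (-(Polynomial.aeval (φ s) q.derivative) - φ k * φ n) * φ n := by
    have h3 := eq_neg_of_add_eq_zero_left (a := Polynomial.aeval (φ s) q)
      (by rw [← add_assoc]; exact hφk.symm)
    rw [h3, sq, neg_add, sub_mul, neg_mul, mul_assoc, ← sub_eq_add_neg]
  rw [heq]
  have hcomm : Commute ((-(Polynomial.aeval (φ s) q.derivative) - φ k * φ n)) (φ n) := by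
    have h1 : Commute (φ s) (φ n) := by
      rw [Commute, SemiconjBy, ← map_mul, ← map_mul, mul_comm]
    have h2 : Commute (φ n) (Polynomial.aeval (φ s) q.derivative) :=
      commute_aeval' h1.symm q.derivative
    have h3 : Commute (φ k) (φ n) := by
      rw [Commute, SemiconjBy, ← map_mul, ← map_mul, mul_comm]
    exact (h2.symm.neg_left).sub_left (h3.mul_left (Commute.refl (φ n)).symm)
  exact hcomm.isNilpotent_mul_left hn

/-- The canonical commutative polynomial algebra hom sending `C X ↦ x`, `X ↦ y` for
commuting `x y`. -/
noncomputable def pairHom (F : Type*) {T : Type*} [Field F] [Ring T] [Algebra F T] {x y : T}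
    (h : Commute x y) : (Polynomial F)[X] →ₐ[F] T :=
  Polynomial.eval₂AlgHom (Polynomial.aeval x) y
    (fun q => (commute_aeval' h.symm q).symm)

@[simp] lemma pairHom_CX (F : Type*) {T : Type*} [Field F] [Ring T] [Algebra F T] {x y : T}
    (h : Commute x y) : pairHom F h (Polynomial.C Polynomial.X) = x := by
  unfold pairHom
  rw [Polynomial.eval₂AlgHom_apply, Polynomial.eval₂_C]
  exact Polynomial.aeval_X x

@[simp] lemma pairHom_X (F : Type*) {T : Type*} [Field F] [Ring T] [Algebra F T] {x y : T}
    (h : Commute x y) : pairHom F h Polynomial.X = y := by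
  unfold pairHom
  rw [Polynomial.eval₂AlgHom_apply, Polynomial.eval₂_X]

/-- Uniqueness core: two commuting roots of a separable polynomial differing by a nilpotent
are equal. -/
lemma roots_eq_of_commute {F V : Type*} [Field F] [AddCommGroup V] [Module F V]
    {p : F[X]} (hsep : p.Separable) {S T : Module.End F V}
    (hSp : Polynomial.aeval S p = 0) (hTp : Polynomial.aeval T p = 0)
    (hcomm : Commute S T) (hnil : IsNilpotent (T - S)) : T = S := by
  have h1 : Commute S (T - S) := hcomm.sub_right (Commute.refl S)
  set φ := pairHom F h1
  have h2 : φ (C X) = S := pairHom_CX F h1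
  have h3 : φ X = T - S := pairHom_X F h1
  have key : φ X = 0 := by
    refine nilpotent_eq_zero_of_sep φ hsep (C X) X ?_ ?_ ?_
    · rw [h2]; exact hSp
    · rw [h2, h3, add_sub_cancel]; exact hTp
    · rw [h3]; exact hnil
  rw [h3] at key
  exact sub_eq_zero.mp key

/-- The semisimple part of a decomposition is annihilated by `p`. -/
lemma aeval_semisimple_part {F V : Type*} [Field F] [AddCommGroup V] [Module F V]
    [FiniteDimensional F V]
    (A : Module.End F V) (p : Polynomial F) (r : ℕ)
    (hirr : Irreducible p)
    (hmin : minpoly F A = p ^ r)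
    (S N : Module.End F V)
    (hA : A = S + N)
    (hS : IsSemisimpleEnd S)
    (hN : IsNilpotent N)
    (hc : S * N = N * S) : Polynomial.aeval S p = 0 := by
  have hcSN : Commute S N := hc
  set φ := pairHom F hcSN
  have h2 : φ (C X) = S := pairHom_CX F hcSN
  have h3 : φ X = N := pairHom_X F hcSN
  -- Step 1: aeval S (p ^ r) is nilpotent.
  have hnilSpr : IsNilpotent (Polynomial.aeval S (p ^ r)) := by
    rw [← h2]
    refine aeval_nilpotent_of_add φ (p ^ r) (C X) X ?_ ?_
    · rw [h2, h3, ← hA, ← hmin]; exact minpoly.aeval F A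
    · rw [h3]; exact hN
  have hnilp : IsNilpotent (Polynomial.aeval S p) := by
    obtain ⟨k, hk⟩ := hnilSpr
    exact ⟨r * k, by rw [pow_mul, ← map_pow, hk]⟩
  -- Step 2: minpoly S is squarefree, so divides p.
  obtain ⟨k, hk⟩ := hnilp
  have hdvd2 : minpoly F S ∣ p ^ k := minpoly.dvd F S (by rw [map_pow, hk])
  have hsq : Squarefree (minpoly F S) :=
    Module.End.IsSemisimple.minpoly_squarefree ((isSemisimpleEnd_iff S).mp hS)
  obtain ⟨i, hik, hassoc⟩ := (dvd_prime_pow hirr.prime k).mp hdvd2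
  have hi1 : i ≤ 1 := by
    by_contra hcon
    push_neg at hcon
    have : p * p ∣ minpoly F S := by
      refine dvd_trans ?_ hassoc.symm.dvd
      calc p * p = p ^ 2 := (sq p).symm
        _ ∣ p ^ i := pow_dvd_pow p hcon
    exact hirr.not_isUnit (hsq p this)
  have hdvdp : minpoly F S ∣ p := by
    refine dvd_trans hassoc.dvd ?_
    calc p ^ i ∣ p ^ 1 := pow_dvd_pow p hi1
      _ = p := pow_one p
  obtain ⟨c, hc3⟩ := hdvdp
  rw [hc3, map_mul, minpoly.aeval, zero_mul]

/-- Newton's lemma: there is a polynomial `z` with `p ^ (k+1) ∣ p.comp z` and `p ∣ X - z`. -/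
lemma newton_lemma {F : Type*} [Field F] {p : F[X]} (hsep : p.Separable) (k : ℕ) :
    ∃ z : F[X], p ^ (k + 1) ∣ p.comp z ∧ p ∣ X - z := by
  obtain ⟨a, b, hab⟩ := hsep
  induction k with
  | zero => exact ⟨X, by simpa using dvd_refl p, by simp⟩
  | succ k ih =>
    obtain ⟨z, hz1, hz2⟩ := ih
    refine ⟨z - p.comp z * b.comp z, ?_, ?_⟩
    · -- Taylor expansion
      set P : (F[X])[X] := p.map (C : F →+* F[X]) with hP
      set y : F[X] := -(p.comp z * b.comp z) with hy
      obtain ⟨c, hc⟩ := P.binomExpansion z y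
      have hcomp : ∀ q w : F[X], q.comp w = (q.map (C : F →+* F[X])).eval w := by
        intro q w; rw [eval_map]; rfl
      have heq : p.comp (z - p.comp z * b.comp z) = P.eval (z + y) := by
        rw [hcomp p, hP]
        congr 1
        try rw [hy]
        try ring
      have hder : P.derivative.eval z = p.derivative.comp z := by
        rw [hP, derivative_map, ← hcomp]
      have hone : a.comp z * p.comp z + b.comp z * p.derivative.comp z = 1 := by
        have := congrArg (fun q : F[X] => q.comp z) hab
        simpa [add_comp, mul_comp, one_comp] using this
      have hPz : P.eval z = p.comp z := (hcomp p z).symm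
      rw [heq, hc, hPz, hder, hy]
      have hexp : p.comp z + p.derivative.comp z * -(p.comp z * b.comp z) +
          c * (-(p.comp z * b.comp z)) ^ 2 =
          (p.comp z) ^ 2 * (a.comp z + c * (b.comp z) ^ 2) := by
        have h1 : p.derivative.comp z * b.comp z = 1 - a.comp z * p.comp z := by
          rw [← hone]; ring
        calc p.comp z + p.derivative.comp z * -(p.comp z * b.comp z) +
            c * (-(p.comp z * b.comp z)) ^ 2
            = p.comp z - (p.derivative.comp z * b.comp z) * p.comp z +
              c * (p.comp z) ^ 2 * (b.comp z) ^ 2 := by ring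
          _ = p.comp z - (1 - a.comp z * p.comp z) * p.comp z +
              c * (p.comp z) ^ 2 * (b.comp z) ^ 2 := by rw [h1]
          _ = (p.comp z) ^ 2 * (a.comp z + c * (b.comp z) ^ 2) := by ring
      rw [hexp]
      have : p ^ (k + 1 + 1) ∣ (p.comp z) ^ 2 := by
        calc p ^ (k + 1 + 1) ∣ p ^ (2 * (k + 1)) := pow_dvd_pow p (by omega)
          _ = (p ^ (k + 1)) ^ 2 := by rw [← pow_mul, mul_comm]
          _ ∣ (p.comp z) ^ 2 := pow_dvd_pow_of_dvd hz1 2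
      exact this.mul_right _
    · have hpz : p ∣ p.comp z := dvd_trans (dvd_pow_self p (Nat.succ_ne_zero k)) hz1
      have : X - (z - p.comp z * b.comp z) = (X - z) + p.comp z * b.comp z := by ring
      rw [this]
      exact dvd_add hz2 (hpz.mul_right _)

/-- Jordan–Chevalley decomposition, uniqueness: If the minimal polynomial of
`A` is `p ^ r` with `p` irreducible and separable, and `A = S + N = S' + N'` with `S, S'`
semisimple, `N, N'` nilpotent, `S N = N S` and `S' N' = N' S'`, then `S = S'` and
`N = N'`. -/
theorem jordan_chevalley_unique
    {F V : Type*} [Field F] [AddCommGroup V] [Module F V] [FiniteDimensional F V]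
    (A : Module.End F V) (p : Polynomial F) (r : ℕ) (hr : 0 < r)
    (hirr : Irreducible p) (hsep : p.Separable)
    (hmin : minpoly F A = p ^ r)
    (S N S' N' : Module.End F V)
    (hA : A = S + N) (hA' : A = S' + N')
    (hS : IsSemisimpleEnd S) (hS' : IsSemisimpleEnd S')
    (hN : IsNilpotent N) (hN' : IsNilpotent N')
    (hc : S * N = N * S) (hc' : S' * N' = N' * S') :
    S = S' ∧ N = N' := by
  have hpS : Polynomial.aeval S p = 0 := aeval_semisimple_part A p r hirr hmin S N hA hS hN hc
  have hpS' : Polynomial.aeval S' p = 0 :=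
    aeval_semisimple_part A p r hirr hmin S' N' hA' hS' hN' hc'
  -- Newton: canonical semisimple part S₀ = aeval A z
  obtain ⟨z, hz1, hz2⟩ := newton_lemma hsep (r - 1)
  rw [Nat.sub_add_cancel hr] at hz1
  set S₀ : Module.End F V := Polynomial.aeval A z with hS₀
  have hApr : Polynomial.aeval A (p ^ r) = 0 := by rw [← hmin]; exact minpoly.aeval F A
  have hpS₀ : Polynomial.aeval S₀ p = 0 := by
    rw [hS₀, ← Polynomial.aeval_comp]
    obtain ⟨c, hc2⟩ := hz1
    rw [hc2, map_mul, hApr, zero_mul]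
  have hN₀nil : IsNilpotent (A - S₀) := by
    obtain ⟨w, hw⟩ := hz2
    have : A - S₀ = Polynomial.aeval A p * Polynomial.aeval A w := by
      rw [← map_mul, ← hw, map_sub, Polynomial.aeval_X]
    rw [this]
    have hnilAp : IsNilpotent (Polynomial.aeval A p) := ⟨r, by rw [← map_pow]; exact hApr⟩
    have hcomm : Commute (Polynomial.aeval A p) (Polynomial.aeval A w) :=
      commute_aeval' (commute_aeval' (Commute.refl A) p).symm w
    exact hcomm.isNilpotent_mul_right hnilAp
  have hcSA : Commute S A := by rw [hA]; exact (Commute.refl S).add_right hc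
  have hcS'A : Commute S' A := by rw [hA']; exact (Commute.refl S').add_right hc'
  have hcNA : Commute N A := by
    rw [hA]; exact (Commute.symm hc).add_right (Commute.refl N)
  have hcN'A : Commute N' A := by
    rw [hA']; exact (Commute.symm hc').add_right (Commute.refl N')
  have hSS₀ : S = S₀ := by
    refine roots_eq_of_commute hsep hpS₀ hpS ((commute_aeval' hcSA z).symm) ?_
    have hSsub : S - S₀ = (A - S₀) - N := by rw [hA]; abel
    rw [hSsub]
    exact Commute.isNilpotent_sub ((hcNA.sub_right (commute_aeval' hcNA z)).symm) hN₀nil hN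
  have hS'S₀ : S' = S₀ := by
    refine roots_eq_of_commute hsep hpS₀ hpS' ((commute_aeval' hcS'A z).symm) ?_
    have hSsub : S' - S₀ = (A - S₀) - N' := by rw [hA']; abel
    rw [hSsub]
    exact Commute.isNilpotent_sub ((hcN'A.sub_right (commute_aeval' hcN'A z)).symm) hN₀nil hN'
  have hSeq : S = S' := by rw [hSS₀, hS'S₀]
  refine ⟨hSeq, ?_⟩
  have : S + N = S' + N' := by rw [← hA, ← hA']
  rw [hSeq] at this
  exact add_left_cancel this
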